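/- In Prisoner's Dilemma, (Cooperate, Cooperate) is the unique M-PCE, and it is a 2-PCE. -/

import Mathlib

open scoped BigOperators

section GameDefs

variable {A1 A2 : Type} [Fintype A1] [Fintype A2]

/-- A mixed strategy over a finite action set: nonnegative weights summing to 1. -/
def IsMixed {A : Type} [Fintype A] (s : A → ℝ) : Prop :=
  (∀ a, 0 ≤ s a) ∧ ∑ a, s a = 1

/-- Expected utility of a utility function `u` under mixed strategies `s1`, `s2`. -/
noncomputable def EU (u : A1 → A2 → ℝ) (s1 : A1 → ℝ) (s2 : A2 → ℝ) : ℝ :=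
  ∑ a1, ∑ a2, s1 a1 * s2 a2 * u a1 a2

/-- `s2` is a best response of player 2 (with utility `u2`) to `s1`. -/
def IsBR2 (u2 : A1 → A2 → ℝ) (s1 : A1 → ℝ) (s2 : A2 → ℝ) : Prop :=
  IsMixed s2 ∧ ∀ t2, IsMixed t2 → EU u2 s1 t2 ≤ EU u2 s1 s2

/-- `s1` is a best response of player 1 (with utility `u1`) to `s2`. -/
def IsBR1 (u1 : A1 → A2 → ℝ) (s2 : A2 → ℝ) (s1 : A1 → ℝ) : Prop :=
  IsMixed s1 ∧ ∀ t1, IsMixed t1 → EU u1 t1 s2 ≤ EU u1 s1 s2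

/-- `BU1`: the best utility player 1 can obtain if player 2 best responds. -/
noncomputable def BU1 (u1 u2 : A1 → A2 → ℝ) : ℝ :=
  sSup {x | ∃ s1 s2, IsMixed s1 ∧ IsBR2 u2 s1 s2 ∧ x = EU u1 s1 s2}

/-- `BU2`: the best utility player 2 can obtain if player 1 best responds. -/
noncomputable def BU2 (u1 u2 : A1 → A2 → ℝ) : ℝ :=
  sSup {x | ∃ s1 s2, IsMixed s2 ∧ IsBR1 u1 s2 s1 ∧ x = EU u2 s1 s2}

/-- A (mixed) strategy profile. -/
def IsProfile (s : (A1 → ℝ) × (A2 → ℝ)) : Prop := IsMixed s.1 ∧ IsMixed s.2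

/-- Perfect cooperative equilibrium. -/
def IsPCE (u1 u2 : A1 → A2 → ℝ) (s : (A1 → ℝ) × (A2 → ℝ)) : Prop :=
  IsProfile s ∧ BU1 u1 u2 ≤ EU u1 s.1 s.2 ∧ BU2 u1 u2 ≤ EU u2 s.1 s.2

/-- Nash equilibrium. -/
def IsNE (u1 u2 : A1 → A2 → ℝ) (s : (A1 → ℝ) × (A2 → ℝ)) : Prop :=
  IsBR1 u1 s.2 s.1 ∧ IsBR2 u2 s.1 s.2

/-- `s` Pareto dominates `s'`. -/
def ParetoDom (u1 u2 : A1 → A2 → ℝ) (s s' : (A1 → ℝ) × (A2 → ℝ)) : Prop :=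
  EU u1 s'.1 s'.2 ≤ EU u1 s.1 s.2 ∧ EU u2 s'.1 s'.2 ≤ EU u2 s.1 s.2

/-- `s` strongly Pareto dominates `s'`. -/
def StrongParetoDom (u1 u2 : A1 → A2 → ℝ) (s s' : (A1 → ℝ) × (A2 → ℝ)) : Prop :=
  ParetoDom u1 u2 s s' ∧
    (EU u1 s'.1 s'.2 < EU u1 s.1 s.2 ∨ EU u2 s'.1 s'.2 < EU u2 s.1 s.2)

/-- α-perfect cooperative equilibrium. -/
def IsAlphaPCE (u1 u2 : A1 → A2 → ℝ) (α : ℝ) (s : (A1 → ℝ) × (A2 → ℝ)) : Prop :=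
  IsProfile s ∧ α + BU1 u1 u2 ≤ EU u1 s.1 s.2 ∧ α + BU2 u1 u2 ≤ EU u2 s.1 s.2

/-- Max-PCE: an α-PCE such that no α'-PCE exists for α' > α. -/
def IsMPCE (u1 u2 : A1 → A2 → ℝ) (s : (A1 → ℝ) × (A2 → ℝ)) : Prop :=
  ∃ α, IsAlphaPCE u1 u2 α s ∧ ∀ α' s', IsAlphaPCE u1 u2 α' s' → α' ≤ α

/-- Cooperative equilibrium: every deviation is either unprofitable when the other
player best responds, or leaves the other player strictly worse off no matter what,
in which case the other player can punish. -/
def IsCE (u1 u2 : A1 → A2 → ℝ) (s : (A1 → ℝ) × (A2 → ℝ)) : Prop :=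
  IsProfile s ∧
  (∀ s1', IsMixed s1' →
    (sSup {x | ∃ s2', IsBR2 u2 s1' s2' ∧ x = EU u1 s1' s2'} ≤ EU u1 s.1 s.2) ∨
    (sSup {x | ∃ s2', IsMixed s2' ∧ x = EU u2 s1' s2'} < EU u2 s.1 s.2 ∧
      ∃ s2', IsMixed s2' ∧ EU u1 s1' s2' ≤ EU u1 s.1 s.2)) ∧
  (∀ s2', IsMixed s2' →
    (sSup {x | ∃ s1', IsBR1 u1 s2' s1' ∧ x = EU u2 s1' s2'} ≤ EU u2 s.1 s.2) ∨
    (sSup {x | ∃ s1', IsMixed s1' ∧ x = EU u1 s1' s2'} < EU u1 s.1 s.2 ∧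
      ∃ s1', IsMixed s1' ∧ EU u2 s1' s2' ≤ EU u2 s.1 s.2))

end GameDefs

/-- The point-mass (pure) strategy on action `a`. -/
def pt {A : Type} [DecidableEq A] (a : A) : A → ℝ := fun b => if b = a then 1 else 0

/-- Actions in Prisoner's Dilemma. -/
inductive PD | C | D
  deriving DecidableEq

instance instFintypePD : Fintype PD :=
  ⟨{PD.C, PD.D}, fun x => by cases x <;> simp⟩

/-- Player 1's payoffs in Prisoner's Dilemma. -/
def pdU1 : PD → PD → ℝ
  | PD.C, PD.C => 3
  | PD.C, PD.D => 0
  | PD.D, PD.C => 5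
  | PD.D, PD.D => 1

/-- Player 2's payoffs in Prisoner's Dilemma. -/
def pdU2 : PD → PD → ℝ
  | PD.C, PD.C => 3
  | PD.C, PD.D => 5
  | PD.D, PD.C => 0
  | PD.D, PD.D => 1

lemma cd_ne : ¬ (PD.C = PD.D) := fun h => PD.noConfusion h

lemma sum_pd (f : PD → ℝ) : ∑ a, f a = f PD.C + f PD.D := by
  rw [show (Finset.univ : Finset PD) = {PD.C, PD.D} from rfl]
  simp

lemma EU_pd (u : PD → PD → ℝ) (s1 s2 : PD → ℝ) :
    EU u s1 s2 = s1 PD.C * s2 PD.C * u PD.C PD.C + s1 PD.C * s2 PD.D * u PD.C PD.D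
      + s1 PD.D * s2 PD.C * u PD.D PD.C + s1 PD.D * s2 PD.D * u PD.D PD.D := by
  simp only [EU, sum_pd]; ring

lemma mixed_pt (a : PD) : IsMixed (pt a) := by
  constructor
  · intro b; simp only [pt]; split <;> norm_num
  · rw [sum_pd]; cases a <;> simp [pt]

lemma br2_ptD (s1 : PD → ℝ) (hs1 : IsMixed s1) : IsBR2 pdU2 s1 (pt PD.D) := by
  refine ⟨mixed_pt _, fun t2 ht2 => ?_⟩
  obtain ⟨h1p, h1s⟩ := hs1
  obtain ⟨h2p, h2s⟩ := ht2
  rw [sum_pd] at h1s h2s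
  rw [EU_pd, EU_pd]
  simp only [pt]
  norm_num [cd_ne, pdU2]
  have := h1p PD.C; have := h1p PD.D; have := h2p PD.C; have := h2p PD.D
  nlinarith [mul_nonneg (h1p PD.C) (h2p PD.C), mul_nonneg (h1p PD.D) (h2p PD.C)]

lemma br2_C_eq_zero (s1 s2 : PD → ℝ) (hs1 : IsMixed s1) (hbr : IsBR2 pdU2 s1 s2) :
    s2 PD.C = 0 := by
  obtain ⟨⟨h2p, h2s⟩, hle⟩ := hbr
  have h := hle (pt PD.D) (mixed_pt _)
  obtain ⟨h1p, h1s⟩ := hs1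
  rw [sum_pd] at h1s h2s
  rw [EU_pd, EU_pd] at h
  simp only [pt] at h
  norm_num [cd_ne, pdU2] at h
  -- h : 5 p + q ≤ 3 p r + 5 p t + q t  with p+q=1, r+t=1
  have hr := h2p PD.C
  nlinarith [h1p PD.C, h1p PD.D, mul_nonneg (h1p PD.C) hr, mul_nonneg (h1p PD.D) hr]

lemma br1_ptD (s2 : PD → ℝ) (hs2 : IsMixed s2) : IsBR1 pdU1 s2 (pt PD.D) := by
  refine ⟨mixed_pt _, fun t1 ht1 => ?_⟩
  obtain ⟨h2p, h2s⟩ := hs2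
  obtain ⟨h1p, h1s⟩ := ht1
  rw [sum_pd] at h1s h2s
  rw [EU_pd, EU_pd]
  simp only [pt] 
  norm_num [cd_ne, pdU1]
  have hb : t1 PD.D = 1 - t1 PD.C := by linarith
  rw [hb]
  nlinarith [mul_nonneg (h1p PD.C) (h2p PD.C), mul_nonneg (h1p PD.C) (h2p PD.D)]

lemma br1_C_eq_zero (s1 s2 : PD → ℝ) (hs2 : IsMixed s2) (hbr : IsBR1 pdU1 s2 s1) :
    s1 PD.C = 0 := by
  obtain ⟨⟨h1p, h1s⟩, hle⟩ := hbr
  have h := hle (pt PD.D) (mixed_pt _)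
  obtain ⟨h2p, h2s⟩ := hs2
  rw [sum_pd] at h1s h2s
  rw [EU_pd, EU_pd] at h
  simp only [pt] at h
  norm_num [cd_ne, pdU1] at h
  have hp := h1p PD.C
  nlinarith [h2p PD.C, h2p PD.D, mul_nonneg hp (h2p PD.C), mul_nonneg hp (h2p PD.D)]

lemma BU1_pd : BU1 pdU1 pdU2 = 1 := by
  apply IsGreatest.csSup_eq
  constructor
  · exact ⟨pt PD.D, pt PD.D, mixed_pt _, br2_ptD _ (mixed_pt _), by
      rw [EU_pd]; simp [pt, pdU1]⟩
  · rintro x ⟨s1, s2, hs1, hbr, rfl⟩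
    have hc := br2_C_eq_zero s1 s2 hs1 hbr
    obtain ⟨h1p, h1s⟩ := hs1
    obtain ⟨⟨h2p, h2s⟩, _⟩ := hbr
    rw [sum_pd] at h1s h2s
    rw [EU_pd]
    simp only [pdU1]
    nlinarith [h1p PD.C, h1p PD.D, h2p PD.D]

lemma BU2_pd : BU2 pdU1 pdU2 = 1 := by
  apply IsGreatest.csSup_eq
  constructor
  · exact ⟨pt PD.D, pt PD.D, mixed_pt _, br1_ptD _ (mixed_pt _), by
      rw [EU_pd]; simp [pt, pdU2]⟩
  · rintro x ⟨s1, s2, hs2, hbr, rfl⟩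
    have hc := br1_C_eq_zero s1 s2 hs2 hbr
    obtain ⟨h2p, h2s⟩ := hs2
    obtain ⟨⟨h1p, h1s⟩, _⟩ := hbr
    rw [sum_pd] at h1s h2s
    rw [EU_pd]
    simp only [pdU2]
    nlinarith [h2p PD.C, h2p PD.D, h1p PD.D]

lemma EU_CC_1 : EU pdU1 (pt PD.C) (pt PD.C) = 3 := by rw [EU_pd]; simp [pt, pdU1]
lemma EU_CC_2 : EU pdU2 (pt PD.C) (pt PD.C) = 3 := by rw [EU_pd]; simp [pt, pdU2]

lemma sum_le_six (s1 s2 : PD → ℝ) (hs1 : IsMixed s1) (hs2 : IsMixed s2) :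
    EU pdU1 s1 s2 + EU pdU2 s1 s2 ≤ 6 := by
  obtain ⟨h1p, h1s⟩ := hs1
  obtain ⟨h2p, h2s⟩ := hs2
  rw [sum_pd] at h1s h2s
  rw [EU_pd, EU_pd]
  simp only [pdU1, pdU2]
  nlinarith [mul_nonneg (h1p PD.C) (h2p PD.D), mul_nonneg (h1p PD.D) (h2p PD.C),
    mul_nonneg (h1p PD.D) (h2p PD.D)]

lemma alpha2 : IsAlphaPCE pdU1 pdU2 2 (pt PD.C, pt PD.C) := by
  refine ⟨⟨mixed_pt _, mixed_pt _⟩, ?_, ?_⟩ <;>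
    simp [BU1_pd, BU2_pd, EU_CC_1, EU_CC_2] <;> norm_num

lemma alpha_le_two (α : ℝ) (s : (PD → ℝ) × (PD → ℝ)) (h : IsAlphaPCE pdU1 pdU2 α s) :
    α ≤ 2 := by
  obtain ⟨⟨hs1, hs2⟩, h1, h2⟩ := h
  rw [BU1_pd] at h1
  rw [BU2_pd] at h2
  have := sum_le_six s.1 s.2 hs1 hs2
  linarith

theorem pd_mpce :
    IsMPCE pdU1 pdU2 (pt PD.C, pt PD.C) ∧
    IsAlphaPCE pdU1 pdU2 2 (pt PD.C, pt PD.C) ∧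
    (∀ s, IsMPCE pdU1 pdU2 s → s = (pt PD.C, pt PD.C)) := by
  refine ⟨⟨2, alpha2, fun α' s' h => alpha_le_two α' s' h⟩, alpha2, ?_⟩
  rintro ⟨s1, s2⟩ ⟨α, hpce, hmax⟩
  have hα2 : α = 2 := le_antisymm (alpha_le_two α _ hpce) (hmax 2 _ alpha2)
  subst hα2
  obtain ⟨⟨hs1, hs2⟩, h1, h2⟩ := hpce
  dsimp only at hs1 hs2 h1 h2
  rw [BU1_pd] at h1
  rw [BU2_pd] at h2
  have hsum := sum_le_six s1 s2 hs1 hs2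
  obtain ⟨h1p, h1s⟩ := hs1
  obtain ⟨h2p, h2s⟩ := hs2
  rw [sum_pd] at h1s h2s
  rw [EU_pd] at h1 h2
  simp only [pdU1] at h1
  simp only [pdU2] at h2
  rw [EU_pd, EU_pd] at hsum
  simp only [pdU1, pdU2] at hsum
  have hpt : s1 PD.C * s2 PD.D = 0 ∧ s1 PD.D * s2 PD.C = 0 ∧ s1 PD.D * s2 PD.D = 0 := by
    refine ⟨?_, ?_, ?_⟩ <;>
    nlinarith [mul_nonneg (h1p PD.C) (h2p PD.D), mul_nonneg (h1p PD.D) (h2p PD.C),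
      mul_nonneg (h1p PD.D) (h2p PD.D)]
  obtain ⟨e1, e2, e3⟩ := hpt
  have hq : s1 PD.D = 0 := by
    by_contra hq
    have hr : s2 PD.C = 0 := by
      rcases mul_eq_zero.1 e2 with h | h; exact absurd h hq; exact h
    have ht : s2 PD.D = 0 := by
      rcases mul_eq_zero.1 e3 with h | h; exact absurd h hq; exact h
    rw [hr, ht] at h2s; norm_num at h2s
  have hp : s1 PD.C = 1 := by linarith
  have ht : s2 PD.D = 0 := by
    rcases mul_eq_zero.1 e1 with h | h
    · rw [hp] at h; norm_num at h
    · exact h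
  have hr : s2 PD.C = 1 := by linarith
  have : s1 = pt PD.C := by funext a; cases a <;> simp [pt, hp, hq]
  have : s2 = pt PD.C := by funext a; cases a <;> simp [pt, hr, ht]
  simp_all
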